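/- arXiv:2412.19626 — 9 statements merged into one kernel-verified Lean document; each statement's English description precedes it below -/
import Mathlib

section
/- For every complex N×N matrix B and all indices a, b, c : Fin n, one has Tr(2 • (γ_a * γ_c * γ_b * B) − ∑_{d : Fin n} γ_a * γ_c * γ_b * γ_d * {γ_d, B}) = 2 · Tr(−2 δ_{ab} • (γ_c * B) + γ_a * γ_b * {γ_c, B}). (This is the simplification of the terms of the Einstein functional containing the derivative coefficients w_{bc}.) -/
open Matrix BigOperators

/-- The anticommutator {X, Y} = X*Y + Y*X of two matrices. -/
noncomputable def acomm {N : ℕ} (X Y : Matrix (Fin N) (Fin N) ℂ) : Matrix (Fin N) (Fin N) ℂ :=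
  X * Y + Y * X

theorem stmt_4 (n N : ℕ) (hn : 0 < n) (hN : 0 < N)
    (γ : Fin n → Matrix (Fin N) (Fin N) ℂ)
    (hγ : ∀ a b : Fin n, γ a * γ b + γ b * γ a
      = (2 * if a = b then (1:ℂ) else 0) • (1 : Matrix (Fin N) (Fin N) ℂ))
    (B : Matrix (Fin N) (Fin N) ℂ) (a b c : Fin n) :
    Matrix.trace ((2:ℂ) • (γ a * γ c * γ b * B)
        - ∑ d : Fin n, γ a * γ c * γ b * γ d * acomm (γ d) B)
      = 2 * Matrix.trace ((-(2 * if a = b then (1:ℂ) else 0)) • (γ c * B)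
          + γ a * γ b * acomm (γ c) B) := by
  have sq : ∀ d : Fin n, γ d * γ d = 1 := by
    intro d
    have h := hγ d d
    rw [if_pos rfl, mul_one, ← two_smul ℂ (γ d * γ d)] at h
    exact smul_right_injective _ (two_ne_zero) h
  have sw : ∀ x y : Fin n, γ x * γ y
      = (2 * if x = y then (1:ℂ) else 0) • 1 - γ y * γ x := by
    intro x y
    rw [eq_sub_iff_add_eq]
    exact hγ x y
  have hstep : ∀ (e : ℂ) (X Y C : Matrix (Fin N) (Fin N) ℂ),
      X * Y = e • 1 - Y * X → X * (Y * C) = e • C - Y * (X * C) := by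
    intro e X Y C h
    rw [← mul_assoc, h, sub_mul, smul_mul_assoc, one_mul, mul_assoc]
  have hU : ∀ d : Fin n, γ d * (γ a * (γ c * (γ b * (γ d * B))))
      = (2 * if d = a then (1:ℂ) else 0) • (γ c * (γ b * (γ d * B)))
        - (2 * if d = c then (1:ℂ) else 0) • (γ a * (γ b * (γ d * B)))
        + (2 * if d = b then (1:ℂ) else 0) • (γ a * (γ c * (γ d * B)))
        - γ a * (γ c * (γ b * B)) := by
    intro d
    rw [hstep _ _ _ _ (sw d a), hstep _ _ _ _ (sw d c), hstep _ _ _ _ (sw d b),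
      ← mul_assoc (γ d) (γ d) B, sq, one_mul]
    simp only [mul_sub, mul_smul_comm]
    module
  have hd : ∀ d : Fin n,
      Matrix.trace (γ a * γ c * γ b * γ d * acomm (γ d) B)
        = Matrix.trace (γ a * (γ c * (γ b * B)))
          + Matrix.trace (γ d * (γ a * (γ c * (γ b * (γ d * B))))) := by
    intro d
    simp only [acomm]
    rw [mul_add, trace_add]
    congr 1
    · rw [show γ a * γ c * γ b * γ d * (γ d * B)
          = γ a * (γ c * (γ b * ((γ d * γ d) * B))) by noncomm_ring, sq, one_mul]
    · rw [show γ a * γ c * γ b * γ d * (B * γ d)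
          = (γ a * (γ c * (γ b * (γ d * B)))) * γ d by noncomm_ring, trace_mul_comm]
  have hcyc : Matrix.trace (γ a * γ b * (B * γ c)) = Matrix.trace (γ c * (γ a * (γ b * B))) := by
    rw [show γ a * γ b * (B * γ c) = (γ a * (γ b * B)) * γ c by noncomm_ring, trace_mul_comm]
  have hkey : Matrix.trace (γ c * (γ a * (γ b * B))) + Matrix.trace (γ c * (γ b * (γ a * B)))
      = (2 * if a = b then (1:ℂ) else 0) * Matrix.trace (γ c * B) := by
    have h : γ c * (γ a * (γ b * B)) + γ c * (γ b * (γ a * B))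
        = (2 * if a = b then (1:ℂ) else 0) • (γ c * B) := by
      rw [show γ c * (γ a * (γ b * B)) + γ c * (γ b * (γ a * B))
          = γ c * ((γ a * γ b + γ b * γ a) * B) by noncomm_ring, hγ a b,
        smul_mul_assoc, one_mul, mul_smul_comm]
    rw [← trace_add, h, trace_smul, smul_eq_mul]
  set e : ℂ := (if a = b then (1:ℂ) else 0) with he
  rw [trace_sub, trace_smul, trace_sum]
  simp only [hd, hU, trace_add, trace_sub, trace_smul, smul_eq_mul,
    Finset.sum_add_distrib, Finset.sum_sub_distrib, Finset.sum_const, Finset.card_univ,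
    Fintype.card_fin, nsmul_eq_mul, mul_ite, mul_one, mul_zero, ite_mul, zero_mul,
    Finset.sum_ite_eq', Finset.mem_univ, if_true]
  simp only [acomm, mul_add, trace_add, trace_smul, smul_eq_mul, neg_mul]
  rw [hcyc, show γ a * γ b * (γ c * B) = γ a * (γ b * (γ c * B)) by noncomm_ring]
  rw [show γ a * γ c * γ b * B = γ a * (γ c * (γ b * B)) by noncomm_ring]
  linear_combination (-2:ℂ) * hkey
end

section
/- For every family B : Fin n → Matrix (Fin N) (Fin N) ℂ of complex N×N matrices and all indices a, b : Fin n, one has Tr(γ_a * (2 • ∑_c γ_c * γ_b * B_c − ∑_c γ_c * {γ_c, B_b} − ∑_c γ_c * {γ_b, B_c} + γ_b * ∑_c {γ_c, B_c})) = Tr(−2 δ_{ab} • ∑_c γ_c * B_c + γ_a * γ_b * ∑_c {γ_c, B_c}). (This is the simplification of the terms of the Einstein functional that are linear in the perturbation B.) -/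
open Matrix BigOperators

theorem stmt_5 (n N : ℕ) (hn : 0 < n) (hN : 0 < N)
    (γ : Fin n → Matrix (Fin N) (Fin N) ℂ)
    (hγ : ∀ a b : Fin n, γ a * γ b + γ b * γ a
      = (2 * if a = b then (1:ℂ) else 0) • (1 : Matrix (Fin N) (Fin N) ℂ))
    (B : Fin n → Matrix (Fin N) (Fin N) ℂ) (a b : Fin n) :
    Matrix.trace (γ a * ((2:ℂ) • ∑ c : Fin n, γ c * γ b * B c
        - ∑ c : Fin n, γ c * acomm (γ c) (B b)
        - ∑ c : Fin n, γ c * acomm (γ b) (B c)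
        + γ b * ∑ c : Fin n, acomm (γ c) (B c)))
      = Matrix.trace ((-(2 * if a = b then (1:ℂ) else 0)) • ∑ c : Fin n, γ c * B c
          + γ a * γ b * ∑ c : Fin n, acomm (γ c) (B c)) := by
  classical
  have hsq : ∀ c, γ c * γ c = 1 := by
    intro c
    have h := hγ c c
    rw [if_pos rfl, mul_one] at h
    have h2 : (2:ℂ) • (γ c * γ c) = (2:ℂ) • (1 : Matrix (Fin N) (Fin N) ℂ) := by
      rw [two_smul]; exact h
    exact smul_right_injective _ (by norm_num : (2:ℂ) ≠ 0) h2
  have hrel : ∀ x y : Fin n, γ x * γ y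
      = (2 * if x = y then (1:ℂ) else 0) • 1 - γ y * γ x :=
    fun x y => eq_sub_of_add_eq (hγ x y)
  -- trace of γa * γc * Bb * γc
  have tr1 : ∀ c : Fin n, trace (γ a * (γ c * (B b * γ c)))
      = (2 * if a = c then (1:ℂ) else 0) * trace (γ c * B b) - trace (γ a * B b) := by
    intro c
    have h0 : γ a * (γ c * (B b * γ c)) = (γ a * γ c * B b) * γ c := by noncomm_ring
    rw [h0, Matrix.trace_mul_comm]
    have h1 : γ c * (γ a * γ c * B b) = (γ c * (γ a * γ c)) * B b := by noncomm_ring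
    rw [h1]
    have e3 : γ c * (γ a * γ c) = (2 * if a = c then (1:ℂ) else 0) • γ c - γ a := by
      rw [hrel a c, mul_sub, mul_smul_comm, mul_one, ← mul_assoc, hsq c, one_mul]
    rw [e3, Matrix.sub_mul, Matrix.smul_mul, trace_sub, trace_smul, smul_eq_mul]
  -- trace of γa * γc * Bc * γb
  have tr2 : ∀ c : Fin n, trace (γ a * (γ c * (B c * γ b)))
      = (2 * if a = b then (1:ℂ) else 0) * trace (γ c * B c)
        - trace (γ a * (γ b * (γ c * B c))) := by
    intro c
    have h0 : γ a * (γ c * (B c * γ b)) = (γ a * γ c * B c) * γ b := by noncomm_ring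
    rw [h0, Matrix.trace_mul_comm]
    have h1 : γ b * (γ a * γ c * B c) = (γ b * γ a) * (γ c * B c) := by noncomm_ring
    rw [h1]
    have e2 : γ b * γ a = (2 * if a = b then (1:ℂ) else 0) • 1 - γ a * γ b := by
      rw [hrel b a]
      congr 2
      simp [eq_comm]
    rw [e2, Matrix.sub_mul, Matrix.smul_mul, one_mul, trace_sub, trace_smul, smul_eq_mul]
    congr 2
    noncomm_ring
  -- trace of γa * γc * γb * Bc
  have tr3 : ∀ c : Fin n, trace (γ a * (γ c * (γ b * B c)))
      = (2 * if c = b then (1:ℂ) else 0) * trace (γ a * B c)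
        - trace (γ a * (γ b * (γ c * B c))) := by
    intro c
    have h0 : γ a * (γ c * (γ b * B c)) = (γ a * (γ c * γ b)) * B c := by noncomm_ring
    rw [h0, hrel c b, mul_sub, mul_smul_comm, mul_one, Matrix.sub_mul, Matrix.smul_mul,
      trace_sub, trace_smul, smul_eq_mul]
    congr 2
    all_goals noncomm_ring
  -- per-index key identity
  have key : ∀ c : Fin n,
      trace (γ a * ((2:ℂ) • (γ c * γ b * B c)
        - γ c * acomm (γ c) (B b)
        - γ c * acomm (γ b) (B c)
        + γ b * acomm (γ c) (B c)))
      = ((2 * if c = b then (1:ℂ) else 0) * trace (γ a * B c)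
          - (2 * if a = c then (1:ℂ) else 0) * trace (γ c * B b))
        + ((-(2 * if a = b then (1:ℂ) else 0)) * trace (γ c * B c)
          + trace (γ a * γ b * acomm (γ c) (B c))) := by
    intro c
    have expand : γ a * ((2:ℂ) • (γ c * γ b * B c)
        - γ c * acomm (γ c) (B b)
        - γ c * acomm (γ b) (B c)
        + γ b * acomm (γ c) (B c))
      = (2:ℂ) • (γ a * (γ c * (γ b * B c)))
        - (γ a * (γ c * γ c * B b) + γ a * (γ c * (B b * γ c)))
        - (γ a * (γ c * (γ b * B c)) + γ a * (γ c * (B c * γ b)))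
        + (γ a * (γ b * (γ c * B c)) + γ a * (γ b * (B c * γ c))) := by
      simp only [acomm]
      noncomm_ring
    have hacomm : γ a * γ b * acomm (γ c) (B c)
        = γ a * (γ b * (γ c * B c)) + γ a * (γ b * (B c * γ c)) := by
      simp only [acomm]
      noncomm_ring
    rw [expand, hacomm, hsq c, one_mul]
    simp only [trace_sub, trace_add, trace_smul, smul_eq_mul]
    rw [tr1 c, tr2 c, tr3 c]
    ring
  -- assemble
  have inner : (2:ℂ) • ∑ c : Fin n, γ c * γ b * B c
        - ∑ c : Fin n, γ c * acomm (γ c) (B b)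
        - ∑ c : Fin n, γ c * acomm (γ b) (B c)
        + γ b * ∑ c : Fin n, acomm (γ c) (B c)
      = ∑ c : Fin n, ((2:ℂ) • (γ c * γ b * B c)
        - γ c * acomm (γ c) (B b)
        - γ c * acomm (γ b) (B c)
        + γ b * acomm (γ c) (B c)) := by
    rw [Finset.smul_sum, Finset.mul_sum, ← Finset.sum_sub_distrib, ← Finset.sum_sub_distrib,
      ← Finset.sum_add_distrib]
  rw [inner, Finset.mul_sum, trace_sum]
  have lhs_eq : ∑ c : Fin n, trace (γ a * ((2:ℂ) • (γ c * γ b * B c)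
        - γ c * acomm (γ c) (B b)
        - γ c * acomm (γ b) (B c)
        + γ b * acomm (γ c) (B c)))
      = (∑ c : Fin n, ((2 * if c = b then (1:ℂ) else 0) * trace (γ a * B c)
          - (2 * if a = c then (1:ℂ) else 0) * trace (γ c * B b)))
        + ∑ c : Fin n, ((-(2 * if a = b then (1:ℂ) else 0)) * trace (γ c * B c)
          + trace (γ a * γ b * acomm (γ c) (B c))) := by
    rw [← Finset.sum_add_distrib]
    exact Finset.sum_congr rfl fun c _ => key c
  rw [lhs_eq]
  have hcancel : (∑ c : Fin n, ((2 * if c = b then (1:ℂ) else 0) * trace (γ a * B c)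
      - (2 * if a = c then (1:ℂ) else 0) * trace (γ c * B b))) = 0 := by
    rw [Finset.sum_sub_distrib]
    simp [mul_assoc, ite_mul, mul_ite, Finset.sum_ite_eq, Finset.sum_ite_eq']
  rw [hcancel, zero_add]
  rw [trace_add, trace_smul, Finset.mul_sum, trace_sum, trace_sum, smul_eq_mul,
    Finset.mul_sum, ← Finset.sum_add_distrib]
end

section
/- For every complex N×N matrix B and all indices a, b : Fin n, one has Tr(γ_a * (4 • (B * γ_b * B) − 4 • (B * {γ_b, B}) − 2 • ∑_c {γ_b, B} * γ_c * {γ_c, B} + 2 • (γ_b * ∑_c {γ_c, B} * {γ_c, B}) + ∑_c γ_c * {γ_c, B} * {γ_b, B} + ∑_c γ_c * {γ_b, B} * {γ_c, B} − γ_b * ∑_c {γ_c, B} * {γ_c, B})) = 2 · Tr((δ_{ab} • B − γ_a * {γ_b, B}) * (∑_c {γ_c, B} * γ_c − 2 • B)). (This is the full simplification of the terms of the Einstein functional that are quadratic in the perturbation B.) -/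
open Matrix BigOperators

theorem stmt_6 (n N : ℕ) (hn : 0 < n) (hN : 0 < N)
    (γ : Fin n → Matrix (Fin N) (Fin N) ℂ)
    (hγ : ∀ a b : Fin n, γ a * γ b + γ b * γ a
      = (2 * if a = b then (1:ℂ) else 0) • (1 : Matrix (Fin N) (Fin N) ℂ))
    (B : Matrix (Fin N) (Fin N) ℂ) (a b : Fin n) :
    Matrix.trace (γ a * ((4:ℂ) • (B * γ b * B)
        - (4:ℂ) • (B * acomm (γ b) B)
        - (2:ℂ) • ∑ c : Fin n, acomm (γ b) B * γ c * acomm (γ c) B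
        + (2:ℂ) • (γ b * ∑ c : Fin n, acomm (γ c) B * acomm (γ c) B)
        + ∑ c : Fin n, γ c * acomm (γ c) B * acomm (γ b) B
        + ∑ c : Fin n, γ c * acomm (γ b) B * acomm (γ c) B
        - γ b * ∑ c : Fin n, acomm (γ c) B * acomm (γ c) B))
      = 2 * Matrix.trace (((if a = b then (1:ℂ) else 0) • B - γ a * acomm (γ b) B)
          * (∑ c : Fin n, acomm (γ c) B * γ c - (2:ℂ) • B)) := by
  -- basic facts
  have hsq : ∀ c : Fin n, γ c * γ c = 1 := by
    intro c
    have h := hγ c c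
    rw [if_pos rfl, mul_one] at h
    have h2 : (2:ℂ) • (γ c * γ c) = (2:ℂ) • (1 : Matrix (Fin N) (Fin N) ℂ) := by
      rw [two_smul]; exact h
    exact smul_right_injective _ (two_ne_zero) h2
  have msq : ∀ (x : Fin n) (Q : Matrix (Fin N) (Fin N) ℂ), γ x * (γ x * Q) = Q := by
    intro x Q; rw [← mul_assoc, hsq x, one_mul]
  have mswap : ∀ (x y : Fin n) (Q : Matrix (Fin N) (Fin N) ℂ),
      γ x * (γ y * Q) = (2 * if x = y then (1:ℂ) else 0) • Q - γ y * (γ x * Q) := by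
    intro x y Q
    have h : (γ x * γ y) * Q = ((2 * if x = y then (1:ℂ) else 0) • (1:Matrix (Fin N) (Fin N) ℂ) - γ y * γ x) * Q := by
      rw [← hγ x y, add_sub_cancel_right]
    rw [← mul_assoc, h, sub_mul, smul_mul_assoc, one_mul, mul_assoc]
  have hcomm : ∀ c : Fin n, γ c * acomm (γ c) B = acomm (γ c) B * γ c := by
    intro c
    have h1 : γ c * acomm (γ c) B = B + γ c * (B * γ c) := by
      rw [acomm, mul_add, ← mul_assoc, hsq c, one_mul]
    have h2 : acomm (γ c) B * γ c = γ c * (B * γ c) + B := by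
      rw [acomm, add_mul, mul_assoc, mul_assoc, hsq c, mul_one]
    rw [h1, h2, add_comm]
  have hu23 : (γ a * (B * (B * γ b))).trace + (γ a * (γ b * (B * B))).trace
      = 2 * (if a = b then (1:ℂ) else 0) * (B * B).trace := by
    have h1 : (γ a * (B * (B * γ b))).trace = (γ b * (γ a * (B * B))).trace := by
      rw [show γ a * (B * (B * γ b)) = (γ a * (B * B)) * γ b by simp only [mul_assoc],
        trace_mul_comm]
    rw [mswap a b (B * B), trace_sub, trace_smul, smul_eq_mul, h1]; ring
  have H2c : ∀ c : Fin n,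
      (γ a * (γ b * (acomm (γ c) B * acomm (γ c) B))).trace
        + (γ a * (γ c * (acomm (γ c) B * acomm (γ b) B))).trace
        + (γ a * (γ c * (acomm (γ b) B * acomm (γ c) B))).trace
      = 2 * (if a = b then (1:ℂ) else 0) * (B * (acomm (γ c) B * γ c)).trace
        + (if c = a then 4 * (γ a * (B * (γ b * B))).trace else 0)
        + (if c = b then 2 * ((γ a * (B * (B * γ b))).trace + (γ a * (γ b * (B * B))).trace) else 0) := by
    intro c
    simp only [acomm, mul_add, add_mul, mul_assoc, trace_add, msq, hsq, mul_one]
    have f1 : (γ a * (γ c * (B * (γ c * (B * γ b))))).trace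
        = (γ b * (γ a * (γ c * (B * (γ c * B))))).trace := by
      rw [show γ a * (γ c * (B * (γ c * (B * γ b)))) = (γ a * (γ c * (B * (γ c * B)))) * γ b by
        simp only [mul_assoc], trace_mul_comm]
    have f2 : (γ a * (γ b * (γ c * (B * (γ c * B))))).trace
          + (γ b * (γ a * (γ c * (B * (γ c * B))))).trace
        = 2 * (if a = b then (1:ℂ) else 0) * (B * (γ c * (B * γ c))).trace := by
      have hz : (B * (γ c * (B * γ c))).trace = (γ c * (B * (γ c * B))).trace := by
        rw [show B * (γ c * (B * γ c)) = (B * (γ c * B)) * γ c by simp only [mul_assoc],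
          trace_mul_comm]
      rw [mswap a b (γ c * (B * (γ c * B))), trace_sub, trace_smul, smul_eq_mul, hz]; ring
    have f3 : (γ a * (γ c * (γ b * (B * (B * γ c))))).trace
        = 2 * (if c = b then (1:ℂ) else 0) * (γ a * (B * (B * γ c))).trace
          - (γ a * (γ b * (γ c * (B * (B * γ c))))).trace := by
      rw [mswap c b (B * (B * γ c))]
      simp only [mul_sub, mul_smul_comm, trace_sub, trace_smul, smul_eq_mul]
    have f4 : (γ a * (γ c * (B * (γ b * (γ c * B))))).trace
        = 2 * (if b = c then (1:ℂ) else 0) * (γ a * (γ c * (B * B))).trace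
          - (γ a * (γ c * (B * (γ c * (γ b * B))))).trace := by
      rw [mswap b c B]
      simp only [mul_sub, mul_smul_comm, trace_sub, trace_smul, smul_eq_mul]
    have f5 : (γ a * (γ c * (B * (γ b * (B * γ c))))).trace
        = 2 * (if c = a then (1:ℂ) else 0) * (γ c * (B * (γ b * B))).trace
          - (γ a * (B * (γ b * B))).trace := by
      rw [show γ a * (γ c * (B * (γ b * (B * γ c)))) = (γ a * (γ c * (B * (γ b * B)))) * γ c by
        simp only [mul_assoc], trace_mul_comm,
        mswap c a (γ c * (B * (γ b * B))), trace_sub, trace_smul, smul_eq_mul, msq]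
    have f6 : (γ a * (γ b * (B * (γ c * (B * γ c))))).trace
        = 2 * (if c = a then (1:ℂ) else 0) * (γ b * (B * (γ c * B))).trace
          - (γ a * (γ c * (γ b * (B * (γ c * B))))).trace := by
      rw [show γ a * (γ b * (B * (γ c * (B * γ c)))) = (γ a * (γ b * (B * (γ c * B)))) * γ c by
        simp only [mul_assoc], trace_mul_comm,
        mswap c a (γ b * (B * (γ c * B))), trace_sub, trace_smul, smul_eq_mul]
    have hca : 2 * (if c = a then (1:ℂ) else 0) * (γ c * (B * (γ b * B))).trace
          + 2 * (if c = a then (1:ℂ) else 0) * (γ b * (B * (γ c * B))).trace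
        = (if c = a then 4 * (γ a * (B * (γ b * B))).trace else 0) := by
      by_cases h : c = a
      · subst h
        have h2 : (γ b * (B * (γ c * B))).trace = (γ c * (B * (γ b * B))).trace := by
          rw [show γ b * (B * (γ c * B)) = (γ b * B) * (γ c * B) by simp only [mul_assoc],
            trace_mul_comm, show γ c * B * (γ b * B) = γ c * (B * (γ b * B)) by
              simp only [mul_assoc]]
        rw [h2]; simp; ring
      · simp [h]
    have hcb : 2 * (if c = b then (1:ℂ) else 0) * (γ a * (B * (B * γ c))).trace
          + 2 * (if b = c then (1:ℂ) else 0) * (γ a * (γ c * (B * B))).trace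
        = (if c = b then 2 * (γ a * (B * (B * γ b))).trace
            + 2 * (γ a * (γ b * (B * B))).trace else 0) := by
      by_cases h : c = b
      · subst h; simp
      · simp [h, Ne.symm h]
    linear_combination f1 + f2 + f3 + f4 + f5 + f6 + hca + hcb + hu23

  have H1 : (∑ i : Fin n, (γ a * (acomm (γ b) B * (γ i * acomm (γ i) B))).trace)
      = ∑ i : Fin n, (γ a * (acomm (γ b) B * (acomm (γ i) B * γ i))).trace :=
    Finset.sum_congr rfl fun c _ => by rw [hcomm c]
  have H2 : (∑ i : Fin n, (γ a * (γ b * (acomm (γ i) B * acomm (γ i) B))).trace)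
        + (∑ i : Fin n, (γ a * (γ i * (acomm (γ i) B * acomm (γ b) B))).trace)
        + (∑ i : Fin n, (γ a * (γ i * (acomm (γ b) B * acomm (γ i) B))).trace)
      = 2 * (if a = b then (1:ℂ) else 0) * (∑ i : Fin n, (B * (acomm (γ i) B * γ i)).trace)
        + 4 * (γ a * (B * (γ b * B))).trace
        + 2 * ((γ a * (B * (B * γ b))).trace + (γ a * (γ b * (B * B))).trace) := by
    rw [← Finset.sum_add_distrib, ← Finset.sum_add_distrib,
      Finset.sum_congr rfl (fun c _ => H2c c), Finset.sum_add_distrib, Finset.sum_add_distrib,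
      ← Finset.mul_sum]
    simp only [Finset.sum_ite_eq', Finset.mem_univ, if_true]
    try ring
  have hx2 : (γ a * (B * acomm (γ b) B)).trace
      = (γ a * (B * (γ b * B))).trace + (γ a * (B * (B * γ b))).trace := by
    simp only [acomm, mul_add, trace_add]
  have hx7 : (γ a * (acomm (γ b) B * B)).trace
      = (γ a * (γ b * (B * B))).trace + (γ a * (B * (γ b * B))).trace := by
    simp only [acomm, add_mul, mul_add, trace_add, mul_assoc]
  simp only [mul_sub, sub_mul, mul_add, add_mul, Finset.mul_sum, Finset.sum_mul,
    mul_smul_comm, smul_mul_assoc, trace_add, trace_sub, trace_smul, trace_sum,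
    smul_eq_mul, mul_assoc]
  rw [Finset.sum_sub_distrib]
  simp only [← Finset.mul_sum]
  linear_combination (-2 : ℂ) * H1 + H2 + (-2 : ℂ) * hu23 + (-4 : ℂ) * hx2 + (-4 : ℂ) * hx7
end

section
/- For every complex N×N matrix B and all indices a, b : Fin n, one has ∑_{c : Fin n} Tr(γ_a * γ_c * B * γ_c * B * γ_b) = ∑_{c : Fin n} Tr(γ_b * γ_a * B * γ_c * B * γ_c). -/
open Matrix BigOperators

theorem stmt_10 (n N : ℕ) (hn : 0 < n) (hN : 0 < N)
    (γ : Fin n → Matrix (Fin N) (Fin N) ℂ)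
    (hγ : ∀ a b : Fin n, γ a * γ b + γ b * γ a
      = (2 * if a = b then (1:ℂ) else 0) • (1 : Matrix (Fin N) (Fin N) ℂ))
    (B : Matrix (Fin N) (Fin N) ℂ) (a b : Fin n) :
    ∑ c : Fin n, Matrix.trace (γ a * γ c * B * γ c * B * γ b)
      = ∑ c : Fin n, Matrix.trace (γ b * γ a * B * γ c * B * γ c) := by
  have key : ∀ c : Fin n, Matrix.trace (γ a * γ c * B * γ c * B * γ b)
      = (2 * if a = c then (1:ℂ) else 0) * Matrix.trace (B * γ c * B * γ b)
        - (2 * if b = c then (1:ℂ) else 0) * Matrix.trace (γ a * B * γ c * B)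
        + Matrix.trace (γ b * γ a * B * γ c * B * γ c) := by
    intro c
    have h1 : γ a * γ c = (2 * if a = c then (1:ℂ) else 0) • 1 - γ c * γ a :=
      eq_sub_of_add_eq (hγ a c)
    have h2 : γ b * γ c = (2 * if b = c then (1:ℂ) else 0) • 1 - γ c * γ b :=
      eq_sub_of_add_eq (hγ b c)
    have e1 : γ a * γ c * B * γ c * B * γ b
        = (2 * if a = c then (1:ℂ) else 0) • (B * γ c * B * γ b)
          - γ c * (γ a * B * γ c * B * γ b) := by
      rw [show γ a * γ c * B * γ c * B * γ b = (γ a * γ c) * (B * γ c * B * γ b) by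
        noncomm_ring, h1, sub_mul, smul_mul_assoc, one_mul]
      noncomm_ring
    rw [e1, Matrix.trace_sub, Matrix.trace_smul, Matrix.trace_mul_comm (γ c)]
    have e2 : (γ a * B * γ c * B * γ b) * γ c
        = (2 * if b = c then (1:ℂ) else 0) • (γ a * B * γ c * B)
          - (γ a * B * γ c * B * γ c) * γ b := by
      rw [show (γ a * B * γ c * B * γ b) * γ c = (γ a * B * γ c * B) * (γ b * γ c) by
        noncomm_ring, h2, mul_sub, mul_smul_comm, mul_one]
      noncomm_ring
    rw [e2, Matrix.trace_sub, Matrix.trace_smul,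
      Matrix.trace_mul_comm (γ a * B * γ c * B * γ c) (γ b)]
    have e3 : γ b * (γ a * B * γ c * B * γ c) = γ b * γ a * B * γ c * B * γ c := by
      noncomm_ring
    rw [e3, smul_eq_mul, smul_eq_mul]
    ring
  rw [Finset.sum_congr rfl fun c _ => key c]
  simp only [Finset.sum_add_distrib, Finset.sum_sub_distrib, ite_mul, mul_ite, zero_mul,
    mul_zero, Finset.sum_ite_eq, Finset.mem_univ, if_true]
  ring_nf
  rw [show B * γ a * B * γ b = B * (γ a * B * γ b) by noncomm_ring,
    Matrix.trace_mul_comm B (γ a * B * γ b)]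
  ring
end

section
/- For every index c : Fin n, the anticommutator of γ_c with the torsion matrix B₀ is {γ_c, B₀} = −(3i/4) • ∑_{k,l : Fin n} T_{ckl} • (γ_k * γ_l). -/
open Matrix BigOperators

theorem stmt_11 (n N : ℕ) (hn : 0 < n) (hN : 0 < N)
    (γ : Fin n → Matrix (Fin N) (Fin N) ℂ)
    (hγ : ∀ a b : Fin n, γ a * γ b + γ b * γ a
      = (2 * if a = b then (1:ℂ) else 0) • (1 : Matrix (Fin N) (Fin N) ℂ))
    (T : Fin n → Fin n → Fin n → ℝ)
    (hT1 : ∀ j k l : Fin n, T j k l = - T k j l)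
    (hT2 : ∀ j k l : Fin n, T j k l = - T j l k)
    (B₀ : Matrix (Fin N) (Fin N) ℂ)
    (hB : B₀ = (-(Complex.I / 8)) •
      ∑ j : Fin n, ∑ k : Fin n, ∑ l : Fin n, ((T j k l : ℂ)) • (γ j * γ k * γ l))
    (c : Fin n) :
    acomm (γ c) B₀
      = (-(3 * Complex.I / 4)) •
          ∑ k : Fin n, ∑ l : Fin n, ((T c k l : ℂ)) • (γ k * γ l) := by
  have key : ∀ j k l : Fin n, γ c * (γ j * γ k * γ l) + (γ j * γ k * γ l) * γ c
      = (2 * if c = j then (1:ℂ) else 0) • (γ k * γ l)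
        - (2 * if c = k then (1:ℂ) else 0) • (γ j * γ l)
        + (2 * if c = l then (1:ℂ) else 0) • (γ j * γ k) := by
    intro j k l
    calc γ c * (γ j * γ k * γ l) + (γ j * γ k * γ l) * γ c
        = (γ c * γ j + γ j * γ c) * (γ k * γ l)
          - γ j * ((γ c * γ k + γ k * γ c) * γ l)
          + γ j * γ k * (γ c * γ l + γ l * γ c) := by noncomm_ring
      _ = _ := by
          rw [hγ c j, hγ c k, hγ c l]
          simp [smul_mul_assoc, mul_smul_comm]
  set S := ∑ j : Fin n, ∑ k : Fin n, ∑ l : Fin n, ((T j k l : ℂ)) • (γ j * γ k * γ l) with hS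
  have main : γ c * S + S * γ c
      = ∑ j : Fin n, ∑ k : Fin n, ∑ l : Fin n,
          (T j k l : ℂ) • (γ c * (γ j * γ k * γ l) + (γ j * γ k * γ l) * γ c) := by
    rw [hS]
    simp only [Finset.mul_sum, Finset.sum_mul, ← Finset.sum_add_distrib,
      mul_smul_comm, smul_mul_assoc, smul_add]
  have hsum : (∑ j : Fin n, ∑ k : Fin n, ∑ l : Fin n,
      (T j k l : ℂ) • (γ c * (γ j * γ k * γ l) + (γ j * γ k * γ l) * γ c))
      = (6:ℂ) • ∑ k : Fin n, ∑ l : Fin n, ((T c k l : ℂ)) • (γ k * γ l) := by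
    simp_rw [key, smul_add, smul_sub, smul_smul]
    simp_rw [Finset.sum_add_distrib, Finset.sum_sub_distrib]
    have hA : (∑ j : Fin n, ∑ k : Fin n, ∑ l : Fin n,
        ((T j k l : ℂ) * (2 * if c = j then (1:ℂ) else 0)) • (γ k * γ l))
        = ∑ k : Fin n, ∑ l : Fin n, ((2:ℂ) * (T c k l : ℂ)) • (γ k * γ l) := by
      rw [Finset.sum_eq_single c]
      · simp [mul_comm]
      · intro b _ hb
        simp [Ne.symm hb]
      · simp
    have hB : (∑ j : Fin n, ∑ k : Fin n, ∑ l : Fin n,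
        ((T j k l : ℂ) * (2 * if c = k then (1:ℂ) else 0)) • (γ j * γ l))
        = ∑ k : Fin n, ∑ l : Fin n, (-(2:ℂ) * (T c k l : ℂ)) • (γ k * γ l) := by
      apply Finset.sum_congr rfl
      intro j _
      rw [Finset.sum_eq_single c]
      · apply Finset.sum_congr rfl
        intro l _
        rw [hT1 j c l]
        push_cast
        ring_nf
        simp
      · intro b _ hb
        simp [Ne.symm hb]
      · simp
    have hC : (∑ j : Fin n, ∑ k : Fin n, ∑ l : Fin n,
        ((T j k l : ℂ) * (2 * if c = l then (1:ℂ) else 0)) • (γ j * γ k))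
        = ∑ k : Fin n, ∑ l : Fin n, ((2:ℂ) * (T c k l : ℂ)) • (γ k * γ l) := by
      apply Finset.sum_congr rfl
      intro j _
      apply Finset.sum_congr rfl
      intro k _
      rw [Finset.sum_eq_single c]
      · rw [hT2 j k c, hT1 j c k]
        push_cast
        ring_nf
        simp
      · intro b _ hb
        simp [Ne.symm hb]
      · simp
    rw [hA, hB, hC, Finset.smul_sum]
    simp_rw [Finset.smul_sum, ← Finset.sum_sub_distrib, ← Finset.sum_add_distrib,
      ← sub_smul, ← add_smul, smul_smul]
    apply Finset.sum_congr rfl; intro k _; apply Finset.sum_congr rfl; intro l _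
    congr 1
    ring
  unfold acomm
  rw [hB]
  rw [Matrix.mul_smul, Matrix.smul_mul, ← smul_add, main, hsum, smul_smul]
  congr 1
  ring
end

section
/- The torsion matrix B₀ satisfies the contraction identity ∑_{c : Fin n} {γ_c, B₀} * γ_c = 6 • B₀. -/
open Matrix BigOperators

theorem stmt_12 (n N : ℕ) (hn : 0 < n) (hN : 0 < N)
    (γ : Fin n → Matrix (Fin N) (Fin N) ℂ)
    (hγ : ∀ a b : Fin n, γ a * γ b + γ b * γ a
      = (2 * if a = b then (1:ℂ) else 0) • (1 : Matrix (Fin N) (Fin N) ℂ))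
    (T : Fin n → Fin n → Fin n → ℝ)
    (hT1 : ∀ j k l : Fin n, T j k l = - T k j l)
    (hT2 : ∀ j k l : Fin n, T j k l = - T j l k)
    (B₀ : Matrix (Fin N) (Fin N) ℂ)
    (hB : B₀ = (-(Complex.I / 8)) •
      ∑ j : Fin n, ∑ k : Fin n, ∑ l : Fin n, ((T j k l : ℂ)) • (γ j * γ k * γ l)) :
    ∑ c : Fin n, acomm (γ c) B₀ * γ c = (6:ℂ) • B₀ := by
  -- squares of gammas are the identity
  have hsq : ∀ a, γ a * γ a = (1 : Matrix (Fin N) (Fin N) ℂ) := by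
    intro a
    have h := hγ a a
    simp at h
    have h2 : (2:ℂ) • (γ a * γ a) = (2:ℂ) • (1 : Matrix (Fin N) (Fin N) ℂ) := by
      rw [two_smul]; simpa using h
    exact smul_right_injective _ (by norm_num) h2
  have hswap : ∀ a b, γ a * γ b
      = (2 * if a = b then (1:ℂ) else 0) • 1 - γ b * γ a := by
    intro a b; rw [eq_sub_iff_add_eq, hγ a b]
  have hT3 : ∀ j k l : Fin n, T j k l = T l j k := by
    intro j k l; rw [hT2 j k l, hT1 j l k]; ring
  set S : Matrix (Fin N) (Fin N) ℂ :=
    ∑ j : Fin n, ∑ k : Fin n, ∑ l : Fin n, ((T j k l : ℂ)) • (γ j * γ k * γ l) with hSdef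
  -- per-term contraction identity
  have step : ∀ c j k l : Fin n, γ c * (γ j * γ k * γ l) * γ c
      = (2 * if c = j then (1:ℂ) else 0) • (γ k * γ l * γ c)
        - (2 * if c = k then (1:ℂ) else 0) • (γ j * γ l * γ c)
        + (2 * if c = l then (1:ℂ) else 0) • (γ j * γ k * γ c)
        - γ j * γ k * γ l := by
    intro c j k l
    have h1 : γ c * (γ j * γ k * γ l) * γ c
        = (γ c * γ j) * γ k * γ l * γ c := by noncomm_ring
    rw [h1, hswap c j]
    have h2 : ((2 * if c = j then (1:ℂ) else 0) • 1 - γ j * γ c) * γ k * γ l * γ c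
        = (2 * if c = j then (1:ℂ) else 0) • (γ k * γ l * γ c)
          - γ j * ((γ c * γ k) * γ l * γ c) := by noncomm_ring
    rw [h2, hswap c k]
    have h3 : γ j * (((2 * if c = k then (1:ℂ) else 0) • 1 - γ k * γ c) * γ l * γ c)
        = (2 * if c = k then (1:ℂ) else 0) • (γ j * γ l * γ c)
          - γ j * γ k * ((γ c * γ l) * γ c) := by noncomm_ring
    rw [h3, hswap c l]
    have h4 : γ j * γ k * (((2 * if c = l then (1:ℂ) else 0) • 1 - γ l * γ c) * γ c)
        = (2 * if c = l then (1:ℂ) else 0) • (γ j * γ k * γ c)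
          - γ j * γ k * γ l * (γ c * γ c) := by noncomm_ring
    rw [h4, hsq, mul_one]
    noncomm_ring
  -- summed contraction identity
  have key : ∀ j k l : Fin n, ∑ c, γ c * (γ j * γ k * γ l) * γ c
      = (2:ℂ) • (γ k * γ l * γ j) - (2:ℂ) • (γ j * γ l * γ k)
        + (2:ℂ) • (γ j * γ k * γ l) - (n:ℂ) • (γ j * γ k * γ l) := by
    intro j k l
    rw [Finset.sum_congr rfl (fun c _ => step c j k l)]
    simp only [Finset.sum_sub_distrib, Finset.sum_add_distrib, mul_ite, mul_one, mul_zero,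
      ite_smul, zero_smul, Finset.sum_ite_eq', Finset.mem_univ, if_true, Finset.sum_const,
      Finset.card_univ, Fintype.card_fin, ← Nat.cast_smul_eq_nsmul ℂ]
  -- index renaming identities
  have hR1 : ∑ j, ∑ k, ∑ l, ((T j k l:ℂ)) • (γ k * γ l * γ j) = S := by
    rw [hSdef, Finset.sum_comm]
    rw [Finset.sum_congr rfl (fun k _ => Finset.sum_comm)]
    refine Finset.sum_congr rfl (fun a _ => Finset.sum_congr rfl (fun b _ =>
      Finset.sum_congr rfl (fun c _ => ?_)))
    rw [← hT3 a b c]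
  have hR2 : ∑ j, ∑ k, ∑ l, ((T j k l:ℂ)) • (γ j * γ l * γ k) = -S := by
    rw [hSdef, ← Finset.sum_neg_distrib]
    refine Finset.sum_congr rfl (fun a _ => ?_)
    rw [Finset.sum_comm, ← Finset.sum_neg_distrib]
    refine Finset.sum_congr rfl (fun b _ => ?_)
    rw [← Finset.sum_neg_distrib]
    refine Finset.sum_congr rfl (fun c _ => ?_)
    rw [hT2 a c b]; push_cast; module
  -- contraction on S
  have hFS : ∑ c, γ c * S * γ c = ((6:ℂ) - (n:ℂ)) • S := by
    have expand : ∀ c : Fin n, γ c * S * γ c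
        = ∑ j, ∑ k, ∑ l, ((T j k l:ℂ)) • (γ c * (γ j * γ k * γ l) * γ c) := by
      intro c
      rw [hSdef]
      simp only [Finset.mul_sum, Finset.sum_mul, mul_smul_comm, smul_mul_assoc]
    rw [Finset.sum_congr rfl (fun c _ => expand c)]
    rw [Finset.sum_comm]
    rw [Finset.sum_congr rfl (fun j _ => Finset.sum_comm)]
    rw [Finset.sum_congr rfl (fun j _ => Finset.sum_congr rfl (fun k _ => Finset.sum_comm))]
    have inner : ∀ j k l : Fin n,
        ∑ c, ((T j k l:ℂ)) • (γ c * (γ j * γ k * γ l) * γ c)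
        = ((T j k l:ℂ)) • (((2:ℂ) • (γ k * γ l * γ j) - (2:ℂ) • (γ j * γ l * γ k)
            + (2:ℂ) • (γ j * γ k * γ l) - (n:ℂ) • (γ j * γ k * γ l))) := by
      intro j k l
      rw [← Finset.smul_sum, key j k l]
    rw [Finset.sum_congr rfl (fun j _ => Finset.sum_congr rfl (fun k _ =>
      Finset.sum_congr rfl (fun l _ => inner j k l)))]
    simp only [smul_sub, smul_add, smul_comm ((T _ _ _ : ℂ)) (2:ℂ),
      smul_comm ((T _ _ _ : ℂ)) ((n:ℂ)),
      Finset.sum_sub_distrib, Finset.sum_add_distrib, ← Finset.smul_sum]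
    rw [hR1, hR2, ← hSdef]
    module
  -- final assembly
  have acomm_eq : ∀ c : Fin n, acomm (γ c) B₀ * γ c = γ c * B₀ * γ c + B₀ := by
    intro c
    rw [acomm, add_mul, mul_assoc B₀, hsq, mul_one]
  rw [Finset.sum_congr rfl (fun c _ => acomm_eq c), Finset.sum_add_distrib,
    Finset.sum_const, Finset.card_univ, Fintype.card_fin, ← Nat.cast_smul_eq_nsmul ℂ]
  have hmid : ∑ c, γ c * B₀ * γ c = ((6:ℂ) - (n:ℂ)) • B₀ := by
    rw [hB]
    simp only [mul_smul_comm, smul_mul_assoc, ← Finset.smul_sum]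
    rw [hFS]
    module
  rw [hmid, hB]
  module
end

section
/- For all indices a, b, c : Fin n, one has Tr([γ_a, γ_b] * {γ_c, B₀}) = 3·i · Tr(1) · T_{abc}, where Tr(1) is the trace of the N×N identity matrix. (This is the trace identity that produces the torsion term −u_a w_{bc} T⁰_{abc} in the Einstein functional of the Dirac operator with totally antisymmetric torsion.) -/
open Matrix BigOperators

/-- The commutator [X, Y] = X*Y − Y*X of two matrices. -/
noncomputable def mcomm {N : ℕ} (X Y : Matrix (Fin N) (Fin N) ℂ) : Matrix (Fin N) (Fin N) ℂ :=
  X * Y - Y * X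

/-- Hoist an if whose condition does not depend on the summation variable out of a sum. -/
lemma sum_if_const {α : Type*} [Fintype α] (P : Prop) [Decidable P] (f : α → ℂ) :
    ∑ x : α, (if P then f x else 0) = if P then ∑ x : α, f x else 0 := by
  split <;> simp

/-- Kronecker delta as a complex scalar. -/
noncomputable def ee {n : ℕ} (x y : Fin n) : ℂ := if x = y then 1 else 0

theorem stmt_13 (n N : ℕ) (hn : 0 < n) (hN : 0 < N)
    (γ : Fin n → Matrix (Fin N) (Fin N) ℂ)
    (hγ : ∀ a b : Fin n, γ a * γ b + γ b * γ a
      = (2 * if a = b then (1:ℂ) else 0) • (1 : Matrix (Fin N) (Fin N) ℂ))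
    (T : Fin n → Fin n → Fin n → ℝ)
    (hT1 : ∀ j k l : Fin n, T j k l = - T k j l)
    (hT2 : ∀ j k l : Fin n, T j k l = - T j l k)
    (B₀ : Matrix (Fin N) (Fin N) ℂ)
    (hB : B₀ = (-(Complex.I / 8)) •
      ∑ j : Fin n, ∑ k : Fin n, ∑ l : Fin n, ((T j k l : ℂ)) • (γ j * γ k * γ l))
    (a b c : Fin n) :
    Matrix.trace (mcomm (γ a) (γ b) * acomm (γ c) B₀)
      = 3 * Complex.I * Matrix.trace (1 : Matrix (Fin N) (Fin N) ℂ) * (T a b c : ℂ) := by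
  have hγ' : ∀ x y : Fin n, γ x * γ y + γ y * γ x = (2 * ee x y) • 1 := by
    intro x y; rw [hγ]; rfl
  -- trace of a product of two gammas
  have tr2 : ∀ x y : Fin n, trace (γ x * γ y) = ee x y * trace (1 : Matrix (Fin N) (Fin N) ℂ) := by
    intro x y
    have h := congrArg Matrix.trace (hγ' x y)
    rw [trace_add, trace_smul, trace_mul_comm (γ y) (γ x), smul_eq_mul] at h
    linear_combination h / 2
  -- trace of a product of four gammas
  have tr4 : ∀ x y p q : Fin n, trace (γ x * (γ y * (γ p * γ q)))
      = (ee y p * ee x q - ee y q * ee x p + ee x y * ee p q)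
          * trace (1 : Matrix (Fin N) (Fin N) ℂ) := by
    intro x y p q
    have h1 := congrArg (fun M => Matrix.trace (γ x * M * γ q)) (hγ' y p)
    have h2 := congrArg (fun M => Matrix.trace (γ x * (γ p * M))) (hγ' y q)
    have h3 := congrArg (fun M => Matrix.trace (M * (γ p * γ q))) (hγ' x y)
    simp only [mul_add, add_mul, trace_add, Matrix.mul_smul, Matrix.smul_mul, trace_smul,
      mul_one, one_mul, smul_eq_mul, mul_assoc] at h1 h2 h3
    have h4 : trace (γ x * (γ p * (γ q * γ y))) = trace (γ y * (γ x * (γ p * γ q))) := by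
      calc trace (γ x * (γ p * (γ q * γ y))) = trace ((γ x * γ p * γ q) * γ y) := by
              rw [mul_assoc, mul_assoc]
        _ = trace (γ y * (γ x * γ p * γ q)) := trace_mul_comm _ _
        _ = trace (γ y * (γ x * (γ p * γ q))) := by rw [mul_assoc]
    have t1 := tr2 x q
    have t2 := tr2 x p
    have t3 := tr2 p q
    linear_combination (h1 - h2 + h3 + h4) / 2 + ee y p * t1 - ee y q * t2 + ee x y * t3
  -- trace of commutator times a pair of gammas
  have tr4m : ∀ p q : Fin n, trace (mcomm (γ a) (γ b) * (γ p * γ q))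
      = (2 * (ee b p * ee a q - ee a p * ee b q))
          * trace (1 : Matrix (Fin N) (Fin N) ℂ) := by
    intro p q
    have hba : ee b a = ee a b := by simp [ee, eq_comm]
    rw [mcomm, sub_mul, trace_sub, mul_assoc, mul_assoc, tr4 a b p q, tr4 b a p q, hba]
    ring
  -- anticommutator of γ c with a product of three gammas
  have sw : ∀ x y : Fin n, γ y * γ x = (2 * ee x y) • 1 - γ x * γ y := by
    intro x y; exact eq_sub_of_add_eq' (hγ' x y)
  have hac : ∀ j k l : Fin n, γ c * (γ j * γ k * γ l) + (γ j * γ k * γ l) * γ c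
      = (2 * ee l c) • (γ j * γ k) - (2 * ee k c) • (γ j * γ l) + (2 * ee j c) • (γ k * γ l) := by
    intro j k l
    have key : γ c * (γ j * γ k * γ l)
        = (2 * ee j c) • (γ k * γ l) - (2 * ee k c) • (γ j * γ l) + (2 * ee l c) • (γ j * γ k)
          - (γ j * γ k * γ l) * γ c := by
      calc γ c * (γ j * γ k * γ l) = (γ c * γ j) * (γ k * γ l) := by noncomm_ring
        _ = ((2 * ee j c) • 1 - γ j * γ c) * (γ k * γ l) := by rw [sw j c]
        _ = (2 * ee j c) • (γ k * γ l) - γ j * ((γ c * γ k) * γ l) := by noncomm_ring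
        _ = (2 * ee j c) • (γ k * γ l) - γ j * (((2 * ee k c) • 1 - γ k * γ c) * γ l) := by
            rw [sw k c]
        _ = (2 * ee j c) • (γ k * γ l) - (2 * ee k c) • (γ j * γ l)
              + (γ j * γ k) * (γ c * γ l) := by noncomm_ring
        _ = (2 * ee j c) • (γ k * γ l) - (2 * ee k c) • (γ j * γ l)
              + (γ j * γ k) * ((2 * ee l c) • 1 - γ l * γ c) := by rw [sw l c]
        _ = _ := by noncomm_ring
    rw [key]; noncomm_ring
  -- the anticommutator of γ c with B₀, in closed form
  have hACall : acomm (γ c) B₀ = (-(Complex.I/8)) • ∑ j : Fin n, ∑ k : Fin n, ∑ l : Fin n,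
      (T j k l : ℂ) •
        ((2 * ee l c) • (γ j * γ k) - (2 * ee k c) • (γ j * γ l)
          + (2 * ee j c) • (γ k * γ l)) := by
    rw [acomm, hB, Matrix.mul_smul, Matrix.smul_mul, ← smul_add]
    congr 1
    rw [Finset.mul_sum, Finset.sum_mul, ← Finset.sum_add_distrib]
    refine Finset.sum_congr rfl fun j _ => ?_
    rw [Finset.mul_sum, Finset.sum_mul, ← Finset.sum_add_distrib]
    refine Finset.sum_congr rfl fun k _ => ?_
    rw [Finset.mul_sum, Finset.sum_mul, ← Finset.sum_add_distrib]
    refine Finset.sum_congr rfl fun l _ => ?_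
    rw [mul_smul_comm, smul_mul_assoc, ← smul_add, hac j k l]
  rw [hACall, Matrix.mul_smul, trace_smul, smul_eq_mul]
  simp only [Finset.mul_sum, trace_sum, Matrix.mul_smul, mul_sub, mul_add,
    trace_smul, trace_sub, trace_add, smul_eq_mul, tr4m]
  -- now a purely scalar computation
  have c1 : (T b a c : ℂ) = -(T a b c : ℂ) := by norm_cast; linarith [hT1 a b c]
  have c2 : (T a c b : ℂ) = -(T a b c : ℂ) := by norm_cast; linarith [hT2 a b c]
  have c3 : (T b c a : ℂ) = (T a b c : ℂ) := by norm_cast; linarith [hT2 b c a, hT1 a b c]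
  have c4 : (T c a b : ℂ) = (T a b c : ℂ) := by norm_cast; linarith [hT1 a c b, hT2 a b c]
  have c5 : (T c b a : ℂ) = -(T a b c : ℂ) := by
    norm_cast; linarith [hT1 b c a, hT2 b c a, hT1 a b c]
  simp only [ee, mul_ite, ite_mul, mul_zero, zero_mul, mul_one, one_mul, mul_sub, sub_mul,
    mul_add, add_mul, Finset.sum_sub_distrib, ← Finset.sum_add_distrib,
    Finset.sum_ite_eq, Finset.sum_ite_eq', Finset.mem_univ, if_true, sub_zero, zero_sub,
    add_zero, zero_add]
  ring_nf
  simp only [sum_if_const, Finset.sum_ite_eq, Finset.sum_ite_eq', Finset.mem_univ, if_true,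
    Finset.sum_sub_distrib, Finset.sum_add_distrib, Finset.sum_neg_distrib]
  linear_combination (Complex.I * Matrix.trace (1 : Matrix (Fin N) (Fin N) ℂ) / 2) *
    (-c1 + c3 - c2 - c5 + c4)
end

section
/- The trace of the square of the torsion matrix is Tr(B₀ * B₀) = (3/32) · Tr(1) · ∑_{i,j,k : Fin n} T_{ijk}², where Tr(1) is the trace of the N×N identity matrix. -/
open Matrix BigOperators


def kd {α : Type*} [DecidableEq α] (a b : α) : ℂ := if a = b then 1 else 0

lemma tr2 {n N : ℕ} (γ : Fin n → Matrix (Fin N) (Fin N) ℂ)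
    (hγ : ∀ a b : Fin n, γ a * γ b + γ b * γ a
      = (2 * if a = b then (1:ℂ) else 0) • (1 : Matrix (Fin N) (Fin N) ℂ))
    (a b : Fin n) :
    Matrix.trace (γ a * γ b) = kd a b * Matrix.trace (1 : Matrix (Fin N) (Fin N) ℂ) := by
  have h := congrArg Matrix.trace (hγ a b)
  rw [Matrix.trace_add, Matrix.trace_smul, smul_eq_mul, Matrix.trace_mul_comm (γ b) (γ a)] at h
  unfold kd
  linear_combination h / 2

lemma tr4 {n N : ℕ} (γ : Fin n → Matrix (Fin N) (Fin N) ℂ)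
    (hγ : ∀ a b : Fin n, γ a * γ b + γ b * γ a
      = (2 * if a = b then (1:ℂ) else 0) • (1 : Matrix (Fin N) (Fin N) ℂ))
    (a b c d : Fin n) :
    Matrix.trace (γ a * (γ b * (γ c * γ d)))
      = (kd a b * kd c d - kd a c * kd b d + kd a d * kd b c)
        * Matrix.trace (1 : Matrix (Fin N) (Fin N) ℂ) := by
  have e1 := congrArg (fun M => Matrix.trace (M * (γ c * γ d))) (hγ a b)
  have e2 := congrArg (fun M => Matrix.trace (γ b * M * γ d)) (hγ a c)
  have e3 := congrArg (fun M => Matrix.trace (γ b * γ c * M)) (hγ a d)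
  have e4 := Matrix.trace_mul_comm (γ a) (γ b * γ c * γ d)
  simp only [add_mul, mul_add, smul_mul_assoc, mul_smul_comm, one_mul, mul_one,
    Matrix.trace_add, Matrix.trace_smul, smul_eq_mul, mul_assoc] at e1 e2 e3 e4
  have t1 := tr2 γ hγ c d
  have t2 := tr2 γ hγ b d
  have t3 := tr2 γ hγ b c
  unfold kd at *
  linear_combination (e1 - e2 + e3 + e4) / 2 + (if a = b then (1:ℂ) else 0) * t1
    - (if a = c then (1:ℂ) else 0) * t2 + (if a = d then (1:ℂ) else 0) * t3

lemma tr6 {n N : ℕ} (γ : Fin n → Matrix (Fin N) (Fin N) ℂ)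
    (hγ : ∀ a b : Fin n, γ a * γ b + γ b * γ a
      = (2 * if a = b then (1:ℂ) else 0) • (1 : Matrix (Fin N) (Fin N) ℂ))
    (a b c d e f : Fin n) :
    Matrix.trace (γ a * (γ b * (γ c * (γ d * (γ e * γ f)))))
      = (kd a b * (kd c d * kd e f - kd c e * kd d f + kd c f * kd d e)
       - kd a c * (kd b d * kd e f - kd b e * kd d f + kd b f * kd d e)
       + kd a d * (kd b c * kd e f - kd b e * kd c f + kd b f * kd c e)
       - kd a e * (kd b c * kd d f - kd b d * kd c f + kd b f * kd c d)
       + kd a f * (kd b c * kd d e - kd b d * kd c e + kd b e * kd c d))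
        * Matrix.trace (1 : Matrix (Fin N) (Fin N) ℂ) := by
  have f1 := congrArg (fun M => Matrix.trace (M * (γ c * γ d * γ e * γ f))) (hγ a b)
  have f2 := congrArg (fun M => Matrix.trace (γ b * M * (γ d * γ e * γ f))) (hγ a c)
  have f3 := congrArg (fun M => Matrix.trace (γ b * γ c * M * (γ e * γ f))) (hγ a d)
  have f4 := congrArg (fun M => Matrix.trace (γ b * γ c * γ d * M * γ f)) (hγ a e)
  have f5 := congrArg (fun M => Matrix.trace (γ b * γ c * γ d * γ e * M)) (hγ a f)
  have f6 := Matrix.trace_mul_comm (γ a) (γ b * γ c * γ d * γ e * γ f)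
  simp only [add_mul, mul_add, smul_mul_assoc, mul_smul_comm, one_mul, mul_one,
    Matrix.trace_add, Matrix.trace_smul, smul_eq_mul, mul_assoc] at f1 f2 f3 f4 f5 f6
  have q1 := tr4 γ hγ c d e f
  have q2 := tr4 γ hγ b d e f
  have q3 := tr4 γ hγ b c e f
  have q4 := tr4 γ hγ b c d f
  have q5 := tr4 γ hγ b c d e
  unfold kd at *
  linear_combination (f1 - f2 + f3 - f4 + f5 + f6) / 2
    + (if a = b then (1:ℂ) else 0) * q1
    - (if a = c then (1:ℂ) else 0) * q2
    + (if a = d then (1:ℂ) else 0) * q3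
    - (if a = e then (1:ℂ) else 0) * q4
    + (if a = f then (1:ℂ) else 0) * q5

set_option maxHeartbeats 3000000 in
lemma contract {n : ℕ} (T : Fin n → Fin n → Fin n → ℝ)
    (hT1 : ∀ j k l : Fin n, T j k l = - T k j l)
    (hT2 : ∀ j k l : Fin n, T j k l = - T j l k) (K : ℂ) :
    ∑ j : Fin n, ∑ k : Fin n, ∑ l : Fin n, ∑ m : Fin n, ∑ p : Fin n, ∑ q : Fin n,
      (T j k l : ℂ) * ((T m p q : ℂ) *
      ((kd m p * (kd q j * kd k l - kd q k * kd j l + kd q l * kd j k)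
       - kd m q * (kd p j * kd k l - kd p k * kd j l + kd p l * kd j k)
       + kd m j * (kd p q * kd k l - kd p k * kd q l + kd p l * kd q k)
       - kd m k * (kd p q * kd j l - kd p j * kd q l + kd p l * kd q j)
       + kd m l * (kd p q * kd j k - kd p j * kd q k + kd p k * kd q j)) * K))
      = -6 * K * ∑ i : Fin n, ∑ j : Fin n, ∑ k : Fin n, (T i j k : ℂ)^2 := by
  have h0 : ∀ a b : Fin n, (T a a b : ℂ) = 0 := by
    intro a b; have := hT1 a a b; norm_cast; linarith
  have h0' : ∀ a b : Fin n, (T a b b : ℂ) = 0 := by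
    intro a b; have := hT2 a b b; norm_cast; linarith
  have h0'' : ∀ a b : Fin n, (T a b a : ℂ) = 0 := by
    intro a b; have h1 := hT1 a b a; have h2 := hT2 b a a; norm_cast; linarith
  simp only [kd, mul_ite, ite_mul, mul_one, one_mul, mul_zero, zero_mul, mul_add, mul_sub,
    add_mul, sub_mul, Finset.sum_add_distrib, Finset.sum_sub_distrib,
    Finset.sum_ite_eq, Finset.sum_ite_eq', Finset.mem_univ, if_true,
    Finset.sum_ite_irrel, ite_self, Finset.sum_neg_distrib, Finset.sum_const_zero,
    h0, h0', h0'', neg_mul, mul_neg, neg_neg,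
    add_zero, zero_add, sub_zero, zero_sub]
  have cast1 : ∀ a b c : Fin n, (T a c b : ℂ) = -(T a b c : ℂ) := by
    intro a b c; have := hT2 a b c; norm_cast; linarith
  have cast2 : ∀ a b c : Fin n, (T b a c : ℂ) = -(T a b c : ℂ) := by
    intro a b c; have := hT1 a b c; norm_cast; linarith
  have cast3 : ∀ a b c : Fin n, (T c a b : ℂ) = (T a b c : ℂ) := by
    intro a b c; have h1 := hT1 a c b; have h2 := hT2 a b c; norm_cast; linarith
  have cast4 : ∀ a b c : Fin n, (T b c a : ℂ) = (T a b c : ℂ) := by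
    intro a b c; have h1 := hT1 a b c; have h2 := hT2 b a c; norm_cast; linarith
  have cast5 : ∀ a b c : Fin n, (T c b a : ℂ) = -(T a b c : ℂ) := by
    intro a b c; have h1 := hT2 a b c; have h2 := hT1 a c b; have h3 := hT2 c a b
    norm_cast; linarith
  have mk : ∀ (u : Fin n → Fin n → Fin n → ℂ) (e : ℂ),
      (∀ a b c : Fin n, u a b c = e * ((T a b c : ℂ) * ((T a b c : ℂ) * K))) →
      (∑ a : Fin n, ∑ b : Fin n, ∑ c : Fin n, u a b c)
        = e * (K * ∑ i : Fin n, ∑ j : Fin n, ∑ k : Fin n, (T i j k : ℂ)^2) := by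
    intro u e hu
    simp only [Finset.mul_sum]
    exact Finset.sum_congr rfl fun a _ => Finset.sum_congr rfl fun b _ =>
      Finset.sum_congr rfl fun c _ => by rw [hu a b c]; ring
  have s1 := mk (fun a b c => (T a b c : ℂ) * ((T a b c : ℂ) * K)) 1 (fun a b c => by ring)
  have s2 := mk (fun a b c => (T a b c : ℂ) * ((T a c b : ℂ) * K)) (-1)
    (fun a b c => by beta_reduce; rw [cast1 a b c]; ring)
  have s3 := mk (fun a b c => (T a b c : ℂ) * ((T b a c : ℂ) * K)) (-1)
    (fun a b c => by beta_reduce; rw [cast2 a b c]; ring)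
  have s4 := mk (fun a b c => (T a b c : ℂ) * ((T c a b : ℂ) * K)) 1
    (fun a b c => by beta_reduce; rw [cast3 a b c]; ring)
  have s5 := mk (fun a b c => (T a b c : ℂ) * ((T b c a : ℂ) * K)) 1
    (fun a b c => by beta_reduce; rw [cast4 a b c]; ring)
  have s6 := mk (fun a b c => (T a b c : ℂ) * ((T c b a : ℂ) * K)) (-1)
    (fun a b c => by beta_reduce; rw [cast5 a b c]; ring)
  linear_combination -s1 + s2 + s3 - s5 - s4 + s6


theorem stmt_14 (n N : ℕ) (hn : 0 < n) (hN : 0 < N)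
    (γ : Fin n → Matrix (Fin N) (Fin N) ℂ)
    (hγ : ∀ a b : Fin n, γ a * γ b + γ b * γ a
      = (2 * if a = b then (1:ℂ) else 0) • (1 : Matrix (Fin N) (Fin N) ℂ))
    (T : Fin n → Fin n → Fin n → ℝ)
    (hT1 : ∀ j k l : Fin n, T j k l = - T k j l)
    (hT2 : ∀ j k l : Fin n, T j k l = - T j l k)
    (B₀ : Matrix (Fin N) (Fin N) ℂ)
    (hB : B₀ = (-(Complex.I / 8)) •
      ∑ j : Fin n, ∑ k : Fin n, ∑ l : Fin n, ((T j k l : ℂ)) • (γ j * γ k * γ l)) :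
    Matrix.trace (B₀ * B₀)
      = (3 / 32) * Matrix.trace (1 : Matrix (Fin N) (Fin N) ℂ)
        * ∑ i : Fin n, ∑ j : Fin n, ∑ k : Fin n, ((T i j k : ℂ)) ^ 2 := by
  have h6 := tr6 γ hγ
  have hc := contract T hT1 hT2 (Matrix.trace (1 : Matrix (Fin N) (Fin N) ℂ))
  subst hB
  rw [smul_mul_assoc, mul_smul_comm, smul_smul, Matrix.trace_smul, smul_eq_mul]
  have hexp : Matrix.trace
      ((∑ j : Fin n, ∑ k : Fin n, ∑ l : Fin n, ((T j k l : ℂ)) • (γ j * γ k * γ l)) *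
       (∑ j : Fin n, ∑ k : Fin n, ∑ l : Fin n, ((T j k l : ℂ)) • (γ j * γ k * γ l)))
      = ∑ j : Fin n, ∑ k : Fin n, ∑ l : Fin n, ∑ m : Fin n, ∑ p : Fin n, ∑ q : Fin n,
          (T j k l : ℂ) * ((T m p q : ℂ) *
            Matrix.trace (γ m * (γ p * (γ q * (γ j * (γ k * γ l)))))) := by
    simp only [Finset.sum_mul, Finset.mul_sum, Matrix.trace_sum, smul_mul_assoc,
      mul_smul_comm, smul_smul, Matrix.trace_smul, smul_eq_mul, mul_assoc]
  rw [hexp]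
  simp only [h6]
  rw [hc]
  have hI := Complex.I_mul_I
  linear_combination (-(3/32) * Matrix.trace (1 : Matrix (Fin N) (Fin N) ℂ)
    * (∑ i : Fin n, ∑ j : Fin n, ∑ k : Fin n, ((T i j k : ℂ)) ^ 2)) * hI
end

section
/- Let w : Fin n → Fin n → Fin n → ℂ be symmetric in its last two arguments, i.e. w_{bcd} = w_{bdc} for all b, c, d. Then for every a : Fin n, ∑_{b,c,d : Fin n} w_{bcd} · (Tr(γ_a * γ_c * γ_b * γ_d) + Tr(γ_a * γ_d * γ_b * γ_c)) + ∑_{b,c,e : Fin n} w_{bcc} · Tr(γ_a * γ_e * γ_b * γ_e) = Tr(1) · (−n · ∑_c w_{acc} + 4 · ∑_b w_{bba}), where Tr(1) is the trace of the N×N identity matrix. (This is the contraction of the third-derivative coefficients of w appearing in the computation of F₂(k).) -/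
open Matrix BigOperators

theorem stmt_16 (n N : ℕ) (hn : 0 < n) (hN : 0 < N)
    (γ : Fin n → Matrix (Fin N) (Fin N) ℂ)
    (hγ : ∀ a b : Fin n, γ a * γ b + γ b * γ a
      = (2 * if a = b then (1:ℂ) else 0) • (1 : Matrix (Fin N) (Fin N) ℂ))
    (w : Fin n → Fin n → Fin n → ℂ)
    (hw : ∀ b c d : Fin n, w b c d = w b d c)
    (a : Fin n) :
    (∑ b : Fin n, ∑ c : Fin n, ∑ d : Fin n,
        w b c d * (Matrix.trace (γ a * γ c * γ b * γ d)
          + Matrix.trace (γ a * γ d * γ b * γ c)))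
      + (∑ b : Fin n, ∑ c : Fin n, ∑ e : Fin n,
          w b c c * Matrix.trace (γ a * γ e * γ b * γ e))
      = Matrix.trace (1 : Matrix (Fin N) (Fin N) ℂ)
        * (-(n:ℂ) * ∑ c : Fin n, w a c c + 4 * ∑ b : Fin n, w b b a) := by
  set T : ℂ := Matrix.trace (1 : Matrix (Fin N) (Fin N) ℂ) with hT
  have swap : ∀ x y : Fin n, γ x * γ y
      = (2 * if x = y then (1:ℂ) else 0) • (1 : Matrix (Fin N) (Fin N) ℂ) - γ y * γ x := by
    intro x y
    have := hγ x y
    linear_combination (norm := noncomm_ring) this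
  have tr2 : ∀ x y : Fin n,
      Matrix.trace (γ x * γ y) = (if x = y then (1:ℂ) else 0) * T := by
    intro x y
    have h := congrArg Matrix.trace (hγ x y)
    rw [Matrix.trace_add, Matrix.trace_smul, Matrix.trace_mul_comm (γ y) (γ x)] at h
    have h2 : (2:ℂ) * Matrix.trace (γ x * γ y)
        = 2 * ((if x = y then (1:ℂ) else 0) * T) := by
      simp only [smul_eq_mul] at h
      linear_combination h
    exact mul_left_cancel₀ two_ne_zero h2
  have tr4 : ∀ p q r s : Fin n,
      Matrix.trace (γ p * γ q * γ r * γ s)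
        = ((if p = q then (1:ℂ) else 0) * (if r = s then (1:ℂ) else 0)
          - (if p = r then (1:ℂ) else 0) * (if q = s then (1:ℂ) else 0)
          + (if p = s then (1:ℂ) else 0) * (if q = r then (1:ℂ) else 0)) * T := by
    intro p q r s
    have e1 : γ p * γ q * γ r * γ s
        = (2 * if p = q then (1:ℂ) else 0) • (γ r * γ s)
          - ((2 * if p = r then (1:ℂ) else 0) • (γ q * γ s)
            - ((2 * if p = s then (1:ℂ) else 0) • (γ q * γ r)
              - γ q * γ r * γ s * γ p)) := by
      calc γ p * γ q * γ r * γ s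
          = ((2 * if p = q then (1:ℂ) else 0) • (1 : Matrix (Fin N) (Fin N) ℂ)
              - γ q * γ p) * γ r * γ s := by rw [swap p q]
        _ = (2 * if p = q then (1:ℂ) else 0) • (γ r * γ s)
              - γ q * (γ p * γ r) * γ s := by noncomm_ring
        _ = (2 * if p = q then (1:ℂ) else 0) • (γ r * γ s)
              - γ q * ((2 * if p = r then (1:ℂ) else 0) • (1 : Matrix (Fin N) (Fin N) ℂ)
                - γ r * γ p) * γ s := by rw [swap p r]
        _ = (2 * if p = q then (1:ℂ) else 0) • (γ r * γ s)
              - ((2 * if p = r then (1:ℂ) else 0) • (γ q * γ s)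
                - γ q * γ r * (γ p * γ s)) := by noncomm_ring
        _ = (2 * if p = q then (1:ℂ) else 0) • (γ r * γ s)
              - ((2 * if p = r then (1:ℂ) else 0) • (γ q * γ s)
                - γ q * γ r * ((2 * if p = s then (1:ℂ) else 0) • (1 : Matrix (Fin N) (Fin N) ℂ)
                  - γ s * γ p)) := by rw [swap p s]
        _ = _ := by noncomm_ring
    have h := congrArg Matrix.trace e1
    rw [Matrix.trace_sub, Matrix.trace_sub, Matrix.trace_sub, Matrix.trace_smul,
      Matrix.trace_smul, Matrix.trace_smul,
      Matrix.trace_mul_comm (γ q * γ r * γ s) (γ p)] at h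
    rw [tr2, tr2, tr2] at h
    have h2 : (2:ℂ) * Matrix.trace (γ p * γ q * γ r * γ s)
        = 2 * (((if p = q then (1:ℂ) else 0) * (if r = s then (1:ℂ) else 0)
          - (if p = r then (1:ℂ) else 0) * (if q = s then (1:ℂ) else 0)
          + (if p = s then (1:ℂ) else 0) * (if q = r then (1:ℂ) else 0)) * T) := by
      have hm : γ p * (γ q * γ r * γ s) = γ p * γ q * γ r * γ s := by noncomm_ring
      rw [hm] at h
      simp only [smul_eq_mul] at h
      linear_combination h
    exact mul_left_cancel₀ two_ne_zero h2
  simp only [tr4]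
  simp only [mul_add, mul_sub, add_mul, sub_mul, mul_ite, ite_mul, mul_zero, zero_mul, mul_one, one_mul,
    Finset.sum_add_distrib, Finset.sum_sub_distrib, Finset.sum_ite_irrel,
    Finset.sum_ite_eq, Finset.sum_ite_eq', Finset.mem_univ, if_true,
    Finset.sum_const_zero, Finset.sum_const, Finset.card_univ, Fintype.card_fin,
    nsmul_eq_mul, smul_eq_mul]
  have hw2 : ∀ b : Fin n, w b a b = w b b a := fun b => hw b a b
  simp only [hw2, ← Finset.sum_mul, ← Finset.mul_sum]
  ring
end
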